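/- Let U ⊆ ℝ^m be a nonempty convex set and L : ℝ^m → ℝ^k a linear map. Then for every y in the relative interior (intrinsic interior) of L(U), the affine dimension of the fiber U ∩ L⁻¹({y}) equals (affine dimension of U) − (affine dimension of L(U)). In particular, the dimension of the fiber is the same for all y in the relative interior of L(U). -/

import Mathlib

open Set Module

private lemma mem_intrinsicInterior_iff_ball {E : Type*} [NormedAddCommGroup E]
    [NormedSpace ℝ E] {s : Set E} {x : E} :
    x ∈ intrinsicInterior ℝ s ↔
      x ∈ affineSpan ℝ s ∧ ∃ ε > 0, ∀ w, w ∈ affineSpan ℝ s → dist w x < ε → w ∈ s := by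
  rw [mem_intrinsicInterior]
  constructor
  · rintro ⟨y, hy, rfl⟩
    refine ⟨y.2, ?_⟩
    rw [mem_interior_iff_mem_nhds, Metric.mem_nhds_iff] at hy
    obtain ⟨ε, hε, hb⟩ := hy
    exact ⟨ε, hε, fun w hw hd => hb (show (⟨w, hw⟩ : affineSpan ℝ s) ∈ Metric.ball y ε by
      simpa [Metric.mem_ball, Subtype.dist_eq] using hd)⟩
  · rintro ⟨hx, ε, hε, h⟩
    refine ⟨⟨x, hx⟩, ?_, rfl⟩
    rw [mem_interior_iff_mem_nhds, Metric.mem_nhds_iff]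
    exact ⟨ε, hε, fun w hw => h w w.2 (by simpa [Metric.mem_ball, Subtype.dist_eq] using hw)⟩

private lemma combo_mem_intrinsicInterior {E : Type*} [NormedAddCommGroup E]
    [NormedSpace ℝ E] {s : Set E} (hconv : Convex ℝ s) {x b : E} {t : ℝ}
    (hx : x ∈ intrinsicInterior ℝ s) (hb : b ∈ s) (ht : 0 < t) (ht1 : t ≤ 1) :
    t • x + (1 - t) • b ∈ intrinsicInterior ℝ s := by
  rw [mem_intrinsicInterior_iff_ball] at hx ⊢
  obtain ⟨hxs, ε, hε, hball⟩ := hx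
  have hbs : b ∈ affineSpan ℝ s := subset_affineSpan ℝ s hb
  have hz_span : t • x + (1 - t) • b ∈ affineSpan ℝ s := by
    have := AffineMap.lineMap_mem (1 - t) hxs hbs
    rwa [AffineMap.lineMap_apply_module, sub_sub_cancel] at this
  refine ⟨hz_span, t * ε, by positivity, fun w hw hd => ?_⟩
  set z := t • x + (1 - t) • b with hz
  set x' := x + t⁻¹ • (w - z) with hx'
  have hx'span : x' ∈ affineSpan ℝ s := by
    have hwz : w - z ∈ (affineSpan ℝ s).direction := by
      simpa using AffineSubspace.vsub_mem_direction hw hz_span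
    have : t⁻¹ • (w - z) +ᵥ x ∈ affineSpan ℝ s :=
      AffineSubspace.vadd_mem_of_mem_direction (Submodule.smul_mem _ _ hwz) hxs
    simpa [hx', add_comm] using this
  have hdx : dist x' x < ε := by
    rw [dist_eq_norm]
    have : x' - x = t⁻¹ • (w - z) := by rw [hx']; abel
    rw [this, norm_smul, Real.norm_eq_abs, abs_of_pos (by positivity)]
    rw [dist_eq_norm] at hd
    calc t⁻¹ * ‖w - z‖ < t⁻¹ * (t * ε) := by
          apply mul_lt_mul_of_pos_left hd (by positivity)
      _ = ε := by field_simp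
  have hx's : x' ∈ s := hball x' hx'span hdx
  have hw_eq : w = t • x' + (1 - t) • b := by
    rw [hx', smul_add, smul_smul, mul_inv_cancel₀ ht.ne', one_smul, hz]
    abel
  rw [hw_eq]
  exact hconv hx's hb ht.le (by linarith) (by ring)

private lemma finrank_inf_ker {m k : ℕ} (L : (Fin m → ℝ) →ₗ[ℝ] (Fin k → ℝ))
    (V : Submodule ℝ (Fin m → ℝ)) :
    finrank ℝ (V ⊓ LinearMap.ker L : Submodule ℝ (Fin m → ℝ))
      = finrank ℝ V - finrank ℝ (V.map L) := by
  set f := L.comp V.subtype with hf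
  have hr : LinearMap.range f = V.map L := by
    rw [hf, LinearMap.range_comp, Submodule.range_subtype]
  have hk : LinearMap.ker f = (V ⊓ LinearMap.ker L).comap V.subtype := by
    ext x
    simp [hf, LinearMap.mem_ker, x.2]
  have heq : finrank ℝ ((V ⊓ LinearMap.ker L).comap V.subtype)
      = finrank ℝ (V ⊓ LinearMap.ker L : Submodule ℝ (Fin m → ℝ)) :=
    (Submodule.comapSubtypeEquivOfLe inf_le_left).finrank_eq
  have := LinearMap.finrank_range_add_finrank_ker f
  rw [hr, hk, heq] at this
  omega

theorem fiber_dimension_over_relative_interior (m k : ℕ)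
    (U : Set (Fin m → ℝ)) (hU : U.Nonempty) (hUconv : Convex ℝ U)
    (L : (Fin m → ℝ) →ₗ[ℝ] (Fin k → ℝ)) :
    ∀ y ∈ intrinsicInterior ℝ (L '' U),
      Module.finrank ℝ (vectorSpan ℝ (U ∩ L ⁻¹' {y}))
        = Module.finrank ℝ (vectorSpan ℝ U) - Module.finrank ℝ (vectorSpan ℝ (L '' U)) := by
  intro y hy
  set V := vectorSpan ℝ U with hV
  -- image of vectorSpan
  have hmap : vectorSpan ℝ (L '' U) = V.map L := by
    rw [hV, vectorSpan_def, vectorSpan_def, ← Submodule.span_image]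
    congr 1
    ext v
    simp only [Set.mem_vsub, Set.mem_image]
    constructor
    · rintro ⟨a, ⟨a', ha', rfl⟩, b, ⟨b', hb', rfl⟩, rfl⟩
      exact ⟨a' -ᵥ b', ⟨a', ha', b', hb', rfl⟩, by simp [vsub_eq_sub, map_sub]⟩
    · rintro ⟨u, ⟨a, ha, b, hb, rfl⟩, rfl⟩
      exact ⟨L a, ⟨a, ha, rfl⟩, L b, ⟨b, hb, rfl⟩, by simp [vsub_eq_sub, map_sub]⟩
  -- find a point of the relative interior of U in the fiber over y
  obtain ⟨x1, hx1⟩ := hU.intrinsicInterior hUconv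
  have hy' := hy
  rw [mem_intrinsicInterior_iff_ball] at hy'
  obtain ⟨hy_span, ε, hε, hball⟩ := hy'
  have hx1U : x1 ∈ U := intrinsicInterior_subset hx1
  set y1 := L x1 with hy1def
  have hy1 : y1 ∈ L '' U := Set.mem_image_of_mem L hx1U
  set δ : ℝ := ε / (dist y y1 + 1) with hδdef
  have hδ : 0 < δ := by positivity
  set z := y + δ • (y - y1) with hzdef
  have hz_span : z ∈ affineSpan ℝ (L '' U) := by
    have hd : y - y1 ∈ (affineSpan ℝ (L '' U)).direction := by
      simpa using AffineSubspace.vsub_mem_direction hy_span (subset_affineSpan ℝ _ hy1)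
    have : δ • (y - y1) +ᵥ y ∈ affineSpan ℝ (L '' U) :=
      AffineSubspace.vadd_mem_of_mem_direction (Submodule.smul_mem _ _ hd) hy_span
    simpa [hzdef, add_comm] using this
  have hzmem : z ∈ L '' U := by
    apply hball z hz_span
    have : dist z y = δ * dist y y1 := by
      rw [dist_eq_norm, hzdef, add_sub_cancel_left, norm_smul, Real.norm_eq_abs,
        abs_of_pos hδ, dist_eq_norm]
    rw [this, hδdef]
    rw [div_mul_eq_mul_div, div_lt_iff₀ (by positivity)]
    nlinarith [dist_nonneg (x := y) (y := y1)]
  obtain ⟨x2, hx2U, hLx2⟩ := hzmem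
  set t : ℝ := δ / (1 + δ) with htdef
  have h1δ : (0:ℝ) < 1 + δ := by linarith
  have ht : 0 < t := by positivity
  have ht1 : t < 1 := by rw [htdef, div_lt_one h1δ]; linarith
  set p := t • x1 + (1 - t) • x2 with hpdef
  have hp : p ∈ intrinsicInterior ℝ U :=
    combo_mem_intrinsicInterior hUconv hx1 hx2U ht ht1.le
  have hLp : L p = y := by
    rw [hpdef, map_add, map_smul, map_smul, hLx2, ← hy1def, hzdef, htdef]
    rw [show (1 : ℝ) - δ / (1 + δ) = 1 / (1 + δ) by field_simp; ring]
    match_scalars <;> field_simp <;> ring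
  -- the vectorSpan of the fiber equals V ⊓ ker L
  have hspan : vectorSpan ℝ (U ∩ L ⁻¹' {y}) = V ⊓ LinearMap.ker L := by
    apply le_antisymm
    · apply le_inf
      · exact vectorSpan_mono ℝ Set.inter_subset_left
      · rw [vectorSpan_def, Submodule.span_le]
        rintro v ⟨a, ⟨haU, haF⟩, b, ⟨hbU, hbF⟩, rfl⟩
        simp only [Set.mem_preimage, Set.mem_singleton_iff] at haF hbF
        simp only [SetLike.mem_coe, LinearMap.mem_ker, vsub_eq_sub, map_sub, haF, hbF, sub_self]
    · rintro v ⟨hvV, hvK⟩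
      rw [mem_intrinsicInterior_iff_ball] at hp
      obtain ⟨hp_span, εp, hεp, hpball⟩ := hp
      have hpU : p ∈ U := hpball p hp_span (by simp [hεp])
      set c : ℝ := εp / (‖v‖ + 1) with hcdef
      have hc : 0 < c := by positivity
      set q := p + c • v with hqdef
      have hq_span : q ∈ affineSpan ℝ U := by
        have hvd : v ∈ (affineSpan ℝ U).direction := by
          rw [direction_affineSpan]; exact hvV
        have : c • v +ᵥ p ∈ affineSpan ℝ U :=
          AffineSubspace.vadd_mem_of_mem_direction (Submodule.smul_mem _ _ hvd) hp_span
        simpa [hqdef, add_comm] using this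
      have hqU : q ∈ U := by
        apply hpball q hq_span
        rw [dist_eq_norm, hqdef, add_sub_cancel_left, norm_smul, Real.norm_eq_abs,
          abs_of_pos hc, hcdef, div_mul_eq_mul_div, div_lt_iff₀ (by positivity)]
        nlinarith [norm_nonneg v]
      have hLq : L q = y := by
        rw [hqdef, map_add, map_smul, LinearMap.mem_ker.mp hvK, smul_zero, add_zero, hLp]
      have hqF : q ∈ U ∩ L ⁻¹' {y} := ⟨hqU, by simp [hLq]⟩
      have hpF : p ∈ U ∩ L ⁻¹' {y} := ⟨hpU, by simp [hLp]⟩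
      have hmem : q -ᵥ p ∈ vectorSpan ℝ (U ∩ L ⁻¹' {y}) := vsub_mem_vectorSpan ℝ hqF hpF
      have : c⁻¹ • (q -ᵥ p) ∈ vectorSpan ℝ (U ∩ L ⁻¹' {y}) := Submodule.smul_mem _ _ hmem
      rwa [hqdef, vsub_eq_sub, add_sub_cancel_left, smul_smul, inv_mul_cancel₀ hc.ne',
        one_smul] at this
  rw [hspan, hmap]
  exact finrank_inf_ker L V
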